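/- With Ψ(w) := ∫_{−∞}^0 ∏_{j=1}^d Φ₁(t − w_j) dt and η := K/√(log d) for constants K > 0 and d ≥ 3, the sum of first partial derivatives satisfies sup_{w∈ℝ^d} Σ_{j=1}^d sup_{‖y‖_∞ ≤ η} |∂_j Ψ(w + y)| ≤ C, where C depends only on K. -/

import Mathlib

open MeasureTheory

/-- The standard normal density. -/
noncomputable def phi1 (t : ℝ) : ℝ := Real.exp (-t ^ 2 / 2) / Real.sqrt (2 * Real.pi)

/-- The standard normal cdf. -/
noncomputable def Phi1 (t : ℝ) : ℝ := ∫ u in Set.Iic t, phi1 u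

/-- Ψ(w) := ∫_{−∞}^0 ∏_j Φ₁(t − w_j) dt. -/
noncomputable def Psi (d : ℕ) (w : Fin d → ℝ) : ℝ :=
  ∫ t in Set.Iic (0 : ℝ), ∏ j, Phi1 (t - w j)

open Real Set Filter

set_option maxHeartbeats 1000000

lemma phi1_nonneg (t : ℝ) : 0 ≤ phi1 t := by
  unfold phi1; positivity

lemma continuous_phi1 : Continuous phi1 := by
  unfold phi1; fun_prop

lemma phi1_eq (t : ℝ) : phi1 t = (Real.sqrt (2*Real.pi))⁻¹ * Real.exp (-(1/2) * t^2) := by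
  unfold phi1; rw [div_eq_inv_mul]; ring_nf

lemma integrable_phi1 : Integrable phi1 := by
  have h : Integrable (fun t : ℝ => (Real.sqrt (2*Real.pi))⁻¹ * Real.exp (-(1/2) * t^2)) :=
    (integrable_exp_neg_mul_sq (by norm_num)).const_mul _
  exact h.congr (by filter_upwards with t using (phi1_eq t).symm)

lemma integral_phi1 : ∫ t : ℝ, phi1 t = 1 := by
  have h : ∫ t : ℝ, phi1 t = (Real.sqrt (2*Real.pi))⁻¹ * ∫ t : ℝ, Real.exp (-(1/2) * t^2) := by
    rw [← integral_const_mul]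
    exact integral_congr_ae (by filter_upwards with t using phi1_eq t)
  rw [h, integral_gaussian]
  have h2 : Real.pi / (1/2) = 2 * Real.pi := by ring
  rw [h2, inv_mul_cancel₀]
  positivity

lemma integrableOn_phi1 {s : Set ℝ} : IntegrableOn phi1 s := integrable_phi1.integrableOn

lemma Phi1_nonneg (t : ℝ) : 0 ≤ Phi1 t :=
  setIntegral_nonneg measurableSet_Iic (fun u _ => phi1_nonneg u)

lemma Phi1_le_one (t : ℝ) : Phi1 t ≤ 1 := by
  rw [← integral_phi1]
  exact setIntegral_le_integral integrable_phi1 (by filter_upwards with u using phi1_nonneg u)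

lemma Phi1_mono {a b : ℝ} (h : a ≤ b) : Phi1 a ≤ Phi1 b :=
  setIntegral_mono_set integrableOn_phi1
    (by filter_upwards with u using phi1_nonneg u)
    (HasSubset.Subset.eventuallyLE (Iic_subset_Iic.2 h))

lemma phi1_mul_exp (a c : ℝ) : phi1 a * Real.exp (c * a) = Real.exp (c^2/2) * phi1 (a - c) := by
  unfold phi1
  rw [div_mul_eq_mul_div, ← Real.exp_add, ← mul_div_assoc, ← Real.exp_add]
  congr 1
  ring

lemma phi1_shift_le {b e c : ℝ} (hc : 0 ≤ c) (he : |e| ≤ c) :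
    phi1 (b - e) ≤ phi1 b * Real.exp (c * |b|) := by
  unfold phi1
  rw [div_mul_eq_mul_div, ← Real.exp_add]
  apply div_le_div_of_nonneg_right _ (by positivity)
  apply Real.exp_le_exp.2
  have h1 : e * b ≤ c * |b| := by
    calc e * b ≤ |e * b| := le_abs_self _
    _ = |e| * |b| := abs_mul _ _
    _ ≤ c * |b| := by apply mul_le_mul_of_nonneg_right he (abs_nonneg _)
  nlinarith [sq_nonneg e, sq_nonneg b]

lemma Phi1_le_gauss {b : ℝ} (hb : b ≤ 0) : Phi1 b ≤ Real.exp (-b^2/2) := by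
  have key : ∀ u ∈ Set.Iic b, phi1 u ≤ Real.exp (-b^2/2) * phi1 (u - b) := by
    intro u hu
    simp only [Set.mem_Iic] at hu
    unfold phi1
    rw [← mul_div_assoc, ← Real.exp_add]
    apply div_le_div_of_nonneg_right _ (by positivity)
    apply Real.exp_le_exp.2
    nlinarith [mul_nonneg (neg_nonneg.2 hb) (sub_nonneg.2 hu)]
  calc Phi1 b ≤ ∫ u in Set.Iic b, Real.exp (-b^2/2) * phi1 (u - b) := by
        apply setIntegral_mono_on integrableOn_phi1 _ measurableSet_Iic key
        exact ((integrable_phi1.comp_sub_right b).const_mul _).integrableOn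
    _ ≤ ∫ u : ℝ, Real.exp (-b^2/2) * phi1 (u - b) := by
        apply setIntegral_le_integral ((integrable_phi1.comp_sub_right b).const_mul _)
        filter_upwards with u
        exact mul_nonneg (Real.exp_nonneg _) (phi1_nonneg _)
    _ = Real.exp (-b^2/2) := by
        rw [integral_const_mul]
        have : (∫ u : ℝ, phi1 (u - b)) = ∫ u : ℝ, phi1 u := by
          simpa [sub_eq_add_neg] using integral_add_right_eq_self phi1 (-b)
        rw [this, integral_phi1, mul_one]

lemma tail_le_gauss {b : ℝ} (hb : 0 ≤ b) : (∫ u in Set.Ioi b, phi1 u) ≤ Real.exp (-b^2/2) := by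
  have key : ∀ u ∈ Set.Ioi b, phi1 u ≤ Real.exp (-b^2/2) * phi1 (u - b) := by
    intro u hu
    simp only [Set.mem_Ioi] at hu
    unfold phi1
    rw [← mul_div_assoc, ← Real.exp_add]
    apply div_le_div_of_nonneg_right _ (by positivity)
    apply Real.exp_le_exp.2
    nlinarith [mul_nonneg hb (le_of_lt (sub_pos.2 hu))]
  calc (∫ u in Set.Ioi b, phi1 u) ≤ ∫ u in Set.Ioi b, Real.exp (-b^2/2) * phi1 (u - b) := by
        apply setIntegral_mono_on integrableOn_phi1 _ measurableSet_Ioi key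
        exact ((integrable_phi1.comp_sub_right b).const_mul _).integrableOn
    _ ≤ ∫ u : ℝ, Real.exp (-b^2/2) * phi1 (u - b) := by
        apply setIntegral_le_integral ((integrable_phi1.comp_sub_right b).const_mul _)
        filter_upwards with u
        exact mul_nonneg (Real.exp_nonneg _) (phi1_nonneg _)
    _ = Real.exp (-b^2/2) := by
        rw [integral_const_mul]
        have : (∫ u : ℝ, phi1 (u - b)) = ∫ u : ℝ, phi1 u := by
          simpa [sub_eq_add_neg] using integral_add_right_eq_self phi1 (-b)
        rw [this, integral_phi1, mul_one]

lemma hasDerivAt_Phi1 (b : ℝ) : HasDerivAt Phi1 (phi1 b) b := by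
  have heq : ∀ t : ℝ, Phi1 t = Phi1 0 + ∫ u in (0:ℝ)..t, phi1 u := by
    intro t
    rw [← intervalIntegral.integral_Iic_sub_Iic integrableOn_phi1 integrableOn_phi1]
    unfold Phi1; ring
  have h : HasDerivAt (fun t => Phi1 0 + ∫ u in (0:ℝ)..t, phi1 u) (phi1 b) b := by
    apply HasDerivAt.const_add
    exact intervalIntegral.integral_hasDerivAt_right
      (integrable_phi1.intervalIntegrable)
      (continuous_phi1.aestronglyMeasurable.stronglyMeasurableAtFilter)
      continuous_phi1.continuousAt
  exact h.congr_of_eventuallyEq (by filter_upwards with t using heq t)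

lemma continuous_Phi1 : Continuous Phi1 :=
  continuous_iff_continuousAt.2 fun b => (hasDerivAt_Phi1 b).continuousAt

lemma tendsto_Phi1_atBot : Tendsto Phi1 atBot (nhds 0) := by
  have h1 : Tendsto (fun b : ℝ => Real.exp (-b^2/2)) atBot (nhds 0) := by
    apply Real.tendsto_exp_atBot.comp
    apply tendsto_atBot_mono' _ _ tendsto_id
    filter_upwards [eventually_le_atBot (-2 : ℝ)] with b hb
    have : (0:ℝ) ≤ (-b) * (-b - 2) := mul_nonneg (by linarith) (by linarith)
    simp only [id]
    nlinarith
  apply squeeze_zero' _ _ h1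
  · filter_upwards with b using Phi1_nonneg b
  · filter_upwards [eventually_le_atBot (0 : ℝ)] with b hb using Phi1_le_gauss hb

lemma integral_shift_Ioi (b c : ℝ) :
    (∫ u in Set.Ioi b, phi1 (u - c)) = ∫ u in Set.Ioi (b - c), phi1 u := by
  have h := (measurePreserving_add_right (volume : Measure ℝ) (-c)).setIntegral_preimage_emb
    ((Homeomorph.addRight (-c)).isClosedEmbedding.measurableEmbedding) phi1 (Set.Ioi (b - c))
  simp only [preimage_add_const_Ioi, sub_neg_eq_add, sub_add_cancel] at h
  rw [← h]
  apply setIntegral_congr_fun measurableSet_Ioi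
  intro x _
  simp [sub_eq_add_neg]

lemma integral_phi1_shift (c : ℝ) : (∫ b : ℝ, phi1 (b - c)) = 1 := by
  rw [show (fun b : ℝ => phi1 (b - c)) = (fun b : ℝ => phi1 (b + (-c))) by
    funext b; rw [sub_eq_add_neg]]
  rw [integral_add_right_eq_self phi1 (-c), integral_phi1]

lemma continuous_prod_Phi1 {d : ℕ} (S : Finset (Fin d)) (v : Fin d → ℝ) (c : ℝ) :
    Continuous (fun u : ℝ => ∏ l ∈ S, Phi1 (u - v l + c)) :=
  continuous_finset_prod _ (fun l _ =>
    continuous_Phi1.comp ((continuous_id.sub continuous_const).add continuous_const))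

lemma prod_Phi1_nonneg {d : ℕ} (S : Finset (Fin d)) (v : Fin d → ℝ) (c u : ℝ) :
    0 ≤ ∏ l ∈ S, Phi1 (u - v l + c) :=
  Finset.prod_nonneg (fun l _ => Phi1_nonneg _)

lemma prod_Phi1_le_one {d : ℕ} (S : Finset (Fin d)) (v : Fin d → ℝ) (c u : ℝ) :
    (∏ l ∈ S, Phi1 (u - v l + c)) ≤ 1 :=
  Finset.prod_le_one (fun l _ => Phi1_nonneg _) (fun l _ => Phi1_le_one _)

lemma phi_exp_le (c : ℝ) (hc : 0 ≤ c) (b : ℝ) :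
    phi1 b * Real.exp (c * |b|) ≤ Real.exp (c^2/2) * (phi1 (b - c) + phi1 (b + c)) := by
  have h1 : Real.exp (c * |b|) ≤ Real.exp (c * b) + Real.exp (-(c * b)) := by
    rcases abs_cases b with ⟨h, _⟩ | ⟨h, _⟩
    · rw [h]; nlinarith [Real.exp_pos (-(c*b))]
    · rw [h, mul_neg, ← neg_mul]; nlinarith [Real.exp_pos (c*b)]
  calc phi1 b * Real.exp (c * |b|) ≤ phi1 b * (Real.exp (c * b) + Real.exp (-(c * b))) := by
        apply mul_le_mul_of_nonneg_left h1 (phi1_nonneg b)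
    _ = phi1 b * Real.exp (c * b) + phi1 b * Real.exp ((-c) * b) := by ring_nf
    _ = Real.exp (c^2/2) * phi1 (b - c) + Real.exp ((-c)^2/2) * phi1 (b - (-c)) := by
        rw [phi1_mul_exp b c, phi1_mul_exp b (-c)]
    _ = Real.exp (c^2/2) * (phi1 (b - c) + phi1 (b + c)) := by
        rw [show (-c)^2 = c^2 by ring, sub_neg_eq_add]; ring

lemma integrable_phi_exp (c : ℝ) (hc : 0 ≤ c) :
    Integrable (fun b : ℝ => phi1 b * Real.exp (c * |b|)) := by
  have hg : Integrable (fun b : ℝ => Real.exp (c^2/2) * (phi1 (b - c) + phi1 (b + c))) :=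
    (((integrable_phi1.comp_sub_right c)).add (integrable_phi1.comp_add_right c)).const_mul _
  apply hg.mono' ((show Continuous (fun b : ℝ => phi1 b * Real.exp (c * |b|)) from
    continuous_phi1.mul (Real.continuous_exp.comp (continuous_const.mul continuous_abs))).aestronglyMeasurable)
  filter_upwards with b
  rw [Real.norm_eq_abs, abs_of_nonneg (mul_nonneg (phi1_nonneg b) (Real.exp_nonneg _))]
  exact phi_exp_le c hc b

lemma integral_phi_exp_le (c : ℝ) (hc : 0 ≤ c) :
    (∫ b : ℝ, phi1 b * Real.exp (c * |b|)) ≤ 2 * Real.exp (c^2/2) := by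
  have hg : Integrable (fun b : ℝ => Real.exp (c^2/2) * (phi1 (b - c) + phi1 (b + c))) :=
    (((integrable_phi1.comp_sub_right c)).add (integrable_phi1.comp_add_right c)).const_mul _
  calc (∫ b : ℝ, phi1 b * Real.exp (c * |b|))
      ≤ ∫ b : ℝ, Real.exp (c^2/2) * (phi1 (b - c) + phi1 (b + c)) :=
        integral_mono (integrable_phi_exp c hc) hg (fun b => phi_exp_le c hc b)
    _ = Real.exp (c^2/2) * ((∫ b : ℝ, phi1 (b - c)) + ∫ b : ℝ, phi1 (b + c)) := by
        rw [integral_const_mul, integral_add (integrable_phi1.comp_sub_right c)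
          (integrable_phi1.comp_add_right c)]
    _ = 2 * Real.exp (c^2/2) := by
        rw [integral_phi1_shift c, show (fun b : ℝ => phi1 (b + c)) = fun b : ℝ => phi1 (b - (-c))
          by funext b; rw [sub_neg_eq_add]]
        rw [integral_phi1_shift (-c)]; ring

lemma integrable_prod_mul {d : ℕ} (S : Finset (Fin d)) (v : Fin d → ℝ) (c : ℝ) {g : ℝ → ℝ}
    (hg : Integrable g) (hgc : Continuous g) (hgnn : ∀ b, 0 ≤ g b) :
    Integrable (fun u : ℝ => (∏ l ∈ S, Phi1 (u - v l + c)) * g u) := by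
  apply hg.mono' (((continuous_prod_Phi1 S v c).mul hgc).aestronglyMeasurable)
  filter_upwards with u
  simp only [Real.norm_eq_abs, Pi.mul_apply]
  rw [abs_of_nonneg (mul_nonneg (prod_Phi1_nonneg S v c u) (hgnn u))]
  calc (∏ l ∈ S, Phi1 (u - v l + c)) * g u ≤ 1 * g u :=
        mul_le_mul_of_nonneg_right (prod_Phi1_le_one S v c u) (hgnn u)
    _ = g u := one_mul _

lemma integrableOn_Phi1_comp (c : ℝ) : IntegrableOn (fun u : ℝ => Phi1 (u - c)) (Set.Iic 0) := by
  have h1 : IntegrableOn (fun u : ℝ => Phi1 (u - c)) (Set.Iic c) := by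
    have hg : IntegrableOn (fun u : ℝ => Real.sqrt (2*Real.pi) * phi1 (u - c)) (Set.Iic c) :=
      ((integrable_phi1.comp_sub_right c).const_mul _).integrableOn
    apply hg.mono' ((show Continuous (fun u : ℝ => Phi1 (u - c)) from continuous_Phi1.comp (continuous_id.sub continuous_const)).aestronglyMeasurable.restrict)
    rw [ae_restrict_iff' measurableSet_Iic]
    filter_upwards with u hu
    rw [Real.norm_eq_abs, abs_of_nonneg (Phi1_nonneg _)]
    calc Phi1 (u - c) ≤ Real.exp (-(u-c)^2/2) := Phi1_le_gauss (by simp only [Set.mem_Iic] at hu; linarith)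
      _ = Real.sqrt (2*Real.pi) * phi1 (u - c) := by
          unfold phi1
          rw [mul_div_assoc']
          rw [mul_comm, mul_div_assoc, div_self (by positivity), mul_one]
  have h2 : IntegrableOn (fun u : ℝ => Phi1 (u - c)) (Set.Ioc c 0) := by
    have hg : IntegrableOn (fun _ : ℝ => (1:ℝ)) (Set.Ioc c 0) := by
      exact integrableOn_const measure_Ioc_lt_top.ne
    apply hg.mono' ((show Continuous (fun u : ℝ => Phi1 (u - c)) from continuous_Phi1.comp (continuous_id.sub continuous_const)).aestronglyMeasurable.restrict)
    filter_upwards with u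
    rw [Real.norm_eq_abs, abs_of_nonneg (Phi1_nonneg _)]
    exact Phi1_le_one _
  exact (h1.union h2).mono_set (fun u hu => by
    rcases le_or_gt u c with h | h
    · exact Or.inl h
    · exact Or.inr ⟨h, hu⟩)

lemma integrableOn_psi_integrand {d : ℕ} (hd : 0 < d) (x : Fin d → ℝ) :
    IntegrableOn (fun u : ℝ => ∏ l, Phi1 (u - x l)) (Set.Iic 0) := by
  have j0 : Fin d := ⟨0, hd⟩
  apply (integrableOn_Phi1_comp (x j0)).mono'
  · exact (show Continuous (fun u : ℝ => ∏ l, Phi1 (u - x l)) from continuous_finset_prod _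
      (fun l _ => continuous_Phi1.comp (continuous_id.sub continuous_const))).aestronglyMeasurable.restrict
  · filter_upwards with u
    rw [Real.norm_eq_abs, abs_of_nonneg (Finset.prod_nonneg (fun l _ => Phi1_nonneg _))]
    calc (∏ l, Phi1 (u - x l)) = Phi1 (u - x j0) * ∏ l ∈ Finset.univ.erase j0, Phi1 (u - x l) :=
          (Finset.mul_prod_erase Finset.univ (fun l => Phi1 (u - x l)) (Finset.mem_univ j0)).symm
      _ ≤ Phi1 (u - x j0) * 1 := by
          apply mul_le_mul_of_nonneg_left _ (Phi1_nonneg _)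
          exact Finset.prod_le_one (fun l _ => Phi1_nonneg _) (fun l _ => Phi1_le_one _)
      _ = Phi1 (u - x j0) := mul_one _

lemma Phi1_diff_le {a b M : ℝ} (hM : ∀ v ∈ Set.uIcc a b, phi1 v ≤ M) :
    |Phi1 b - Phi1 a| ≤ M * |b - a| := by
  rw [show Phi1 b - Phi1 a = ∫ v in a..b, phi1 v from by
    rw [← intervalIntegral.integral_Iic_sub_Iic integrableOn_phi1 integrableOn_phi1]; rfl]
  rw [← Real.norm_eq_abs (∫ v in a..b, phi1 v)]
  apply intervalIntegral.norm_integral_le_of_norm_le_const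
  intro v hv
  rw [Real.norm_eq_abs, abs_of_nonneg (phi1_nonneg v)]
  exact hM v (Set.uIoc_subset_uIcc hv)

lemma hasDerivAt_Phi1_comp (c u : ℝ) :
    HasDerivAt (fun u : ℝ => Phi1 (u - c)) (phi1 (u - c)) u := by
  simpa [Function.comp_def] using (hasDerivAt_Phi1 (u - c)).comp u ((hasDerivAt_id u).sub_const c)

lemma sum_integral_G_le {d : ℕ} (hd : 0 < d) (v : Fin d → ℝ) :
    (∑ j, ∫ u in Set.Iic (0:ℝ), (∏ l ∈ Finset.univ.erase j, Phi1 (u - v l)) * phi1 (u - v j))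
      ≤ 1 := by
  set G : ℝ → ℝ := fun u => ∏ l, Phi1 (u - v l) with hG
  have hderiv : ∀ u : ℝ, HasDerivAt G
      (∑ j, (∏ l ∈ Finset.univ.erase j, Phi1 (u - v l)) * phi1 (u - v j)) u := by
    intro u
    have h := HasDerivAt.finset_prod (u := Finset.univ)
      (f := fun i (u : ℝ) => Phi1 (u - v i)) (f' := fun i => phi1 (u - v i))
      (fun i _ => hasDerivAt_Phi1_comp (v i) u)
    simpa [smul_eq_mul, Finset.prod_fn] using h
  have hint : ∀ j : Fin d, IntegrableOn
      (fun u : ℝ => (∏ l ∈ Finset.univ.erase j, Phi1 (u - v l)) * phi1 (u - v j))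
      (Set.Iic 0) := by
    intro j
    have h := integrable_prod_mul (Finset.univ.erase j) v 0
      (integrable_phi1.comp_sub_right (v j))
      (continuous_phi1.comp (continuous_id.sub continuous_const))
      (fun b => phi1_nonneg _)
    simpa [add_zero] using h.integrableOn
  have hsum_int : IntegrableOn
      (fun u : ℝ => ∑ j, (∏ l ∈ Finset.univ.erase j, Phi1 (u - v l)) * phi1 (u - v j))
      (Set.Iic 0) := integrable_finset_sum _ (fun j _ => hint j)
  have htend : Tendsto G atBot (nhds 0) := by
    have j0 : Fin d := ⟨0, hd⟩
    have h1 : Tendsto (fun u : ℝ => Phi1 (u - v j0)) atBot (nhds 0) := by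
      apply tendsto_Phi1_atBot.comp
      simpa [sub_eq_add_neg] using tendsto_atBot_add_const_right atBot (-(v j0)) tendsto_id
    apply squeeze_zero' (by filter_upwards with u using Finset.prod_nonneg (fun l _ => Phi1_nonneg _))
      _ h1
    filter_upwards with u
    calc G u = Phi1 (u - v j0) * ∏ l ∈ Finset.univ.erase j0, Phi1 (u - v l) :=
          (Finset.mul_prod_erase Finset.univ (fun l => Phi1 (u - v l)) (Finset.mem_univ j0)).symm
      _ ≤ Phi1 (u - v j0) * 1 := mul_le_mul_of_nonneg_left
          (Finset.prod_le_one (fun l _ => Phi1_nonneg _) (fun l _ => Phi1_le_one _)) (Phi1_nonneg _)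
      _ = Phi1 (u - v j0) := mul_one _
  have hftc := integral_Iic_of_hasDerivAt_of_tendsto' (a := 0)
    (fun u _ => hderiv u) hsum_int htend
  calc (∑ j, ∫ u in Set.Iic (0:ℝ), (∏ l ∈ Finset.univ.erase j, Phi1 (u - v l)) * phi1 (u - v j))
      = ∫ u in Set.Iic (0:ℝ), ∑ j, (∏ l ∈ Finset.univ.erase j, Phi1 (u - v l)) * phi1 (u - v j) :=
        (integral_finset_sum _ (fun j _ => hint j)).symm
    _ = G 0 - 0 := hftc
    _ ≤ 1 := by
        rw [sub_zero]
        exact Finset.prod_le_one (fun l _ => Phi1_nonneg _) (fun l _ => Phi1_le_one _)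

lemma abs_deriv_le_of_lip {g : ℝ → ℝ} {m L r : ℝ} (hr : 0 < r) (hg : HasDerivAt g m 0)
    (H : ∀ t : ℝ, |t| ≤ r → |g t - g 0| ≤ L * |t|) : |m| ≤ L := by
  have h := hasDerivAt_iff_tendsto_slope.1 hg
  have h2 : Tendsto (fun t => |slope g 0 t|) (nhdsWithin (0:ℝ) {(0:ℝ)}ᶜ) (nhds |m|) := h.abs
  apply le_of_tendsto h2
  have hball : Metric.ball (0:ℝ) r ∈ nhdsWithin (0:ℝ) {(0:ℝ)}ᶜ :=
    nhdsWithin_le_nhds (Metric.ball_mem_nhds _ hr)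
  filter_upwards [hball, self_mem_nhdsWithin] with t ht ht0
  have htr : |t| < r := by simpa [Real.dist_eq] using ht
  have ht0' : t ≠ 0 := ht0
  rw [slope_def_field, sub_zero, abs_div]
  rw [div_le_iff₀ (abs_pos.2 ht0')]
  exact H t htr.le

noncomputable def Lint {d : ℕ} (w : Fin d → ℝ) (j : Fin d) (η : ℝ) : ℝ :=
  ∫ u in Set.Iic (0:ℝ), (∏ l ∈ Finset.univ.erase j, Phi1 (u - w l + η)) *
    (phi1 (u - w j) * Real.exp (2 * η * |u - w j|))

lemma Lint_nonneg {d : ℕ} (w : Fin d → ℝ) (j : Fin d) (η : ℝ) : 0 ≤ Lint w j η := by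
  apply setIntegral_nonneg measurableSet_Iic
  intro u _
  exact mul_nonneg (prod_Phi1_nonneg _ _ _ _) (mul_nonneg (phi1_nonneg _) (Real.exp_nonneg _))

lemma integrable_Lint_integrand {d : ℕ} (w : Fin d → ℝ) (j : Fin d) {η : ℝ} (hη : 0 < η) :
    Integrable (fun u : ℝ => (∏ l ∈ Finset.univ.erase j, Phi1 (u - w l + η)) *
      (phi1 (u - w j) * Real.exp (2 * η * |u - w j|))) := by
  apply integrable_prod_mul (Finset.univ.erase j) w η
  · have h := (integrable_phi_exp (2*η) (by positivity)).comp_sub_right (w j)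
    simpa using h
  · exact (continuous_phi1.comp (continuous_id.sub continuous_const)).mul
      (Real.continuous_exp.comp (continuous_const.mul
        (continuous_abs.comp (continuous_id.sub continuous_const))))
  · intro b; exact mul_nonneg (phi1_nonneg _) (Real.exp_nonneg _)

lemma prod_shift_split {d : ℕ} (x : Fin d → ℝ) (j : Fin d) (r u : ℝ) :
    (∏ l, Phi1 (u - (x + r • (Pi.single j 1 : Fin d → ℝ)) l)) =
      (∏ l ∈ Finset.univ.erase j, Phi1 (u - x l)) * Phi1 (u - x j - r) := by
  rw [← Finset.prod_erase_mul Finset.univ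
    (fun l => Phi1 (u - (x + r • (Pi.single j 1 : Fin d → ℝ)) l)) (Finset.mem_univ j)]
  congr 1
  · apply Finset.prod_congr rfl
    intro l hl
    have hlj : l ≠ j := Finset.ne_of_mem_erase hl
    have : (x + r • (Pi.single j 1 : Fin d → ℝ)) l = x l := by
      simp [Pi.single_eq_of_ne hlj]
    rw [this]
  · have : (x + r • (Pi.single j 1 : Fin d → ℝ)) j = x j + r := by
      simp [Pi.single_eq_same]
    rw [this]
    ring_nf

lemma psi_lip {d : ℕ} (hd : 0 < d) (w y : Fin d → ℝ) {η : ℝ} (hη : 0 < η)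
    (hy : ∀ l, |y l| ≤ η) (j : Fin d) {s t : ℝ} (hs : |s| ≤ η) (ht : |t| ≤ η) :
    |Psi d (w + y + s • (Pi.single j 1 : Fin d → ℝ)) -
      Psi d (w + y + t • (Pi.single j 1 : Fin d → ℝ))| ≤ Lint w j η * |s - t| := by
  set x := w + y with hx
  have hint : ∀ r : ℝ, IntegrableOn
      (fun u : ℝ => (∏ l ∈ Finset.univ.erase j, Phi1 (u - x l)) * Phi1 (u - x j - r))
      (Set.Iic 0) := by
    intro r
    exact (integrableOn_psi_integrand hd (x + r • (Pi.single j 1 : Fin d → ℝ))).congr_fun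
      (fun u _ => prod_shift_split x j r u) measurableSet_Iic
  have hPsi : ∀ r : ℝ, Psi d (x + r • (Pi.single j 1 : Fin d → ℝ)) =
      ∫ u in Set.Iic (0:ℝ), (∏ l ∈ Finset.univ.erase j, Phi1 (u - x l)) * Phi1 (u - x j - r) := by
    intro r
    exact setIntegral_congr_fun measurableSet_Iic (fun u _ => prod_shift_split x j r u)
  rw [hPsi s, hPsi t, ← integral_sub (hint s) (hint t)]
  have key : ∀ u ∈ Set.Iic (0:ℝ),
      |(∏ l ∈ Finset.univ.erase j, Phi1 (u - x l)) * Phi1 (u - x j - s) -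
       (∏ l ∈ Finset.univ.erase j, Phi1 (u - x l)) * Phi1 (u - x j - t)| ≤
      ((∏ l ∈ Finset.univ.erase j, Phi1 (u - w l + η)) *
        (phi1 (u - w j) * Real.exp (2 * η * |u - w j|))) * |s - t| := by
    intro u _
    rw [← mul_sub, abs_mul, abs_of_nonneg (Finset.prod_nonneg (fun l _ => Phi1_nonneg _))]
    have hxj : x j = w j + y j := rfl
    have h1 := abs_le.1 (hy j)
    have h2 := abs_le.1 hs
    have h3 := abs_le.1 ht
    have hM : ∀ v ∈ Set.uIcc (u - x j - t) (u - x j - s),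
        phi1 v ≤ phi1 (u - w j) * Real.exp (2 * η * |u - w j|) := by
      intro v hv
      have hvv : v = (u - w j) - ((u - w j) - v) := by ring
      have hee : |(u - w j) - v| ≤ 2 * η := by
        rcases Set.mem_uIcc.1 hv with ⟨ha, hb⟩ | ⟨ha, hb⟩ <;>
          (rw [hxj] at ha hb; rw [abs_le]; constructor <;> linarith)
      rw [hvv]
      exact phi1_shift_le (by positivity) hee
    have hdiff := Phi1_diff_le (a := u - x j - t) (b := u - x j - s)
      (M := phi1 (u - w j) * Real.exp (2 * η * |u - w j|)) hM
    rw [show (u - x j - s) - (u - x j - t) = t - s by ring, abs_sub_comm t s] at hdiff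
    have hprod : (∏ l ∈ Finset.univ.erase j, Phi1 (u - x l)) ≤
        ∏ l ∈ Finset.univ.erase j, Phi1 (u - w l + η) := by
      apply Finset.prod_le_prod (fun l _ => Phi1_nonneg _)
      intro l _
      apply Phi1_mono
      have h4 := (abs_le.1 (hy l)).1
      have : x l = w l + y l := rfl
      rw [this]
      linarith
    calc (∏ l ∈ Finset.univ.erase j, Phi1 (u - x l)) * |Phi1 (u - x j - s) - Phi1 (u - x j - t)|
        ≤ (∏ l ∈ Finset.univ.erase j, Phi1 (u - x l)) *
          ((phi1 (u - w j) * Real.exp (2 * η * |u - w j|)) * |s - t|) :=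
          mul_le_mul_of_nonneg_left hdiff (Finset.prod_nonneg (fun l _ => Phi1_nonneg _))
      _ ≤ (∏ l ∈ Finset.univ.erase j, Phi1 (u - w l + η)) *
          ((phi1 (u - w j) * Real.exp (2 * η * |u - w j|)) * |s - t|) := by
          apply mul_le_mul_of_nonneg_right hprod
          have := phi1_nonneg (u - w j)
          have := Real.exp_nonneg (2 * η * |u - w j|)
          have := abs_nonneg (s - t)
          positivity
      _ = ((∏ l ∈ Finset.univ.erase j, Phi1 (u - w l + η)) *
          (phi1 (u - w j) * Real.exp (2 * η * |u - w j|))) * |s - t| := by ring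
  calc |∫ u in Set.Iic (0:ℝ),
        ((∏ l ∈ Finset.univ.erase j, Phi1 (u - x l)) * Phi1 (u - x j - s) -
         (∏ l ∈ Finset.univ.erase j, Phi1 (u - x l)) * Phi1 (u - x j - t))|
      ≤ ∫ u in Set.Iic (0:ℝ),
        |(∏ l ∈ Finset.univ.erase j, Phi1 (u - x l)) * Phi1 (u - x j - s) -
         (∏ l ∈ Finset.univ.erase j, Phi1 (u - x l)) * Phi1 (u - x j - t)| :=
      by
        have h := norm_integral_le_integral_norm (μ := (volume : Measure ℝ).restrict (Set.Iic 0))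
          (f := fun u : ℝ =>
            (∏ l ∈ Finset.univ.erase j, Phi1 (u - x l)) * Phi1 (u - x j - s) -
            (∏ l ∈ Finset.univ.erase j, Phi1 (u - x l)) * Phi1 (u - x j - t))
        simpa [Real.norm_eq_abs] using h
    _ ≤ ∫ u in Set.Iic (0:ℝ),
        ((∏ l ∈ Finset.univ.erase j, Phi1 (u - w l + η)) *
          (phi1 (u - w j) * Real.exp (2 * η * |u - w j|))) * |s - t| := by
        apply setIntegral_mono_on ((hint s).sub (hint t)).abs _ measurableSet_Iic key
        exact ((integrable_Lint_integrand w j hη).mul_const _).integrableOn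
    _ = Lint w j η * |s - t| := by
        unfold Lint
        rw [← integral_mul_const]

lemma fderiv_le {d : ℕ} (hd : 0 < d) (w y : Fin d → ℝ) {η : ℝ} (hη : 0 < η)
    (hy : ‖y‖ ≤ η) (j : Fin d) :
    |fderiv ℝ (Psi d) (w + y) (Pi.single j 1)| ≤ Lint w j η := by
  have hyl : ∀ l, |y l| ≤ η := fun l => le_trans (by simpa using norm_le_pi_norm y l) hy
  by_cases hdiff : DifferentiableAt ℝ (Psi d) (w + y)
  · have h0 : w + y + (0:ℝ) • (Pi.single j 1 : Fin d → ℝ) = w + y := by simp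
    have hinner : HasDerivAt (fun t : ℝ => w + y + t • (Pi.single j 1 : Fin d → ℝ))
        (Pi.single j 1 : Fin d → ℝ) 0 := by
      simpa using ((hasDerivAt_id (0:ℝ)).smul_const (Pi.single j 1 : Fin d → ℝ)).const_add (w + y)
    have hF : HasFDerivAt (Psi d) (fderiv ℝ (Psi d) (w + y))
        ((fun t : ℝ => w + y + t • (Pi.single j 1 : Fin d → ℝ)) 0) := by
      rw [show (fun t : ℝ => w + y + t • (Pi.single j 1 : Fin d → ℝ)) 0 = w + y from by simp]
      exact hdiff.hasFDerivAt
    have hcomp : HasDerivAt (fun t : ℝ => Psi d (w + y + t • (Pi.single j 1 : Fin d → ℝ)))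
        (fderiv ℝ (Psi d) (w + y) (Pi.single j 1)) 0 := by
        have := hF.comp_hasDerivAt 0 hinner; exact this
    apply abs_deriv_le_of_lip hη hcomp
    intro t ht
    have h := psi_lip hd w y hη hyl j (s := t) (t := 0) ht (by simpa using hη.le)
    rw [zero_smul, add_zero, sub_zero] at h
    rw [h0]
    exact h
  · rw [fderiv_zero_of_not_differentiableAt hdiff]
    simpa using Lint_nonneg w j η

lemma Lint_le_crude {d : ℕ} (w : Fin d → ℝ) (j : Fin d) {η : ℝ} (hη : 0 < η) :
    Lint w j η ≤ 2 * Real.exp ((2*η)^2/2) := by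
  have hg : Integrable (fun u : ℝ => phi1 (u - w j) * Real.exp (2 * η * |u - w j|)) := by
    simpa using (integrable_phi_exp (2*η) (by positivity)).comp_sub_right (w j)
  calc Lint w j η ≤ ∫ u in Set.Iic (0:ℝ), phi1 (u - w j) * Real.exp (2 * η * |u - w j|) := by
        apply setIntegral_mono_on (integrable_Lint_integrand w j hη).integrableOn
          hg.integrableOn measurableSet_Iic
        intro u _
        calc (∏ l ∈ Finset.univ.erase j, Phi1 (u - w l + η)) *
            (phi1 (u - w j) * Real.exp (2 * η * |u - w j|))
            ≤ 1 * (phi1 (u - w j) * Real.exp (2 * η * |u - w j|)) :=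
              mul_le_mul_of_nonneg_right (prod_Phi1_le_one _ _ _ _)
                (mul_nonneg (phi1_nonneg _) (Real.exp_nonneg _))
          _ = phi1 (u - w j) * Real.exp (2 * η * |u - w j|) := one_mul _
    _ ≤ ∫ u : ℝ, phi1 (u - w j) * Real.exp (2 * η * |u - w j|) := by
        apply setIntegral_le_integral hg
        filter_upwards with u
        exact mul_nonneg (phi1_nonneg _) (Real.exp_nonneg _)
    _ = ∫ b : ℝ, phi1 b * Real.exp (2 * η * |b|) := by
        rw [show (fun u : ℝ => phi1 (u - w j) * Real.exp (2 * η * |u - w j|)) =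
          (fun u : ℝ => (fun b => phi1 b * Real.exp (2 * η * |b|)) (u + -(w j))) from by
            funext u; simp [sub_eq_add_neg]]
        exact integral_add_right_eq_self (fun b => phi1 b * Real.exp (2 * η * |b|)) (-(w j))
    _ ≤ 2 * Real.exp ((2*η)^2/2) := integral_phi_exp_le (2*η) (by positivity)

lemma phi_exp_pointwise_le {b η T : ℝ} (hη : 0 < η) (hT : 0 ≤ T) (hb : b ≤ T) :
    phi1 b * Real.exp (2 * η * |b|) ≤ Real.exp (4*η*T + 2*η^2) * phi1 (b + 2*η) := by
  unfold phi1
  rw [div_mul_eq_mul_div, ← Real.exp_add, ← mul_div_assoc, ← Real.exp_add]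
  apply div_le_div_of_nonneg_right _ (by positivity)
  apply Real.exp_le_exp.2
  rcases abs_cases b with ⟨h, hb0⟩ | ⟨h, hb0⟩ <;> rw [h] <;> nlinarith [mul_pos hη hη, mul_nonneg hη.le hT]

lemma Lint_split {d : ℕ} (w : Fin d → ℝ) (j : Fin d) {η T : ℝ} (hη : 0 < η) (h4 : 4*η ≤ T) :
    Lint w j η ≤ Real.exp (4*η*T + 2*η^2) *
        (∫ u in Set.Iic (0:ℝ), (∏ l ∈ Finset.univ.erase j, Phi1 (u - w l + 2*η)) *
          phi1 (u - w j + 2*η))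
      + Real.exp (2*η^2) * Real.exp (-(T - 2*η)^2/2) := by
  have hT : 0 ≤ T := le_trans (by positivity) h4
  set c := w j + T with hc
  set f : ℝ → ℝ := fun u => (∏ l ∈ Finset.univ.erase j, Phi1 (u - w l + η)) *
    (phi1 (u - w j) * Real.exp (2 * η * |u - w j|)) with hf
  have hfnn : ∀ u, 0 ≤ f u := fun u =>
    mul_nonneg (prod_Phi1_nonneg _ _ _ _) (mul_nonneg (phi1_nonneg _) (Real.exp_nonneg _))
  have hfint : Integrable f := integrable_Lint_integrand w j hη
  -- split the integral
  have hsplit : Lint w j η = (∫ u in Set.Iic (0:ℝ) ∩ Set.Iic c, f u) +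
      ∫ u in Set.Iic (0:ℝ) \ Set.Iic c, f u := by
    unfold Lint
    rw [integral_inter_add_diff measurableSet_Iic hfint.integrableOn]
  rw [hsplit]
  -- the g function
  set g : ℝ → ℝ := fun u => (∏ l ∈ Finset.univ.erase j, Phi1 (u - w l + 2*η)) *
    phi1 (u - w j + 2*η) with hg
  have hgnn : ∀ u, 0 ≤ g u := fun u =>
    mul_nonneg (prod_Phi1_nonneg _ _ _ _) (phi1_nonneg _)
  have hgint : Integrable g := by
    apply integrable_prod_mul (Finset.univ.erase j) w (2*η)
    · exact (integrable_phi1.comp_sub_right (w j - 2*η)).congr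
        (by filter_upwards with u; rw [show u - (w j - 2*η) = u - w j + 2*η from by ring])
    · exact (show Continuous (fun u : ℝ => phi1 (u - w j + 2*η)) from
        continuous_phi1.comp ((continuous_sub_right (w j)).add continuous_const))
    · intro b; exact phi1_nonneg _
  have hterm1 : (∫ u in Set.Iic (0:ℝ) ∩ Set.Iic c, f u) ≤
      Real.exp (4*η*T + 2*η^2) * ∫ u in Set.Iic (0:ℝ), g u := by
    rw [← integral_const_mul]
    calc (∫ u in Set.Iic (0:ℝ) ∩ Set.Iic c, f u)
        ≤ ∫ u in Set.Iic (0:ℝ) ∩ Set.Iic c, Real.exp (4*η*T + 2*η^2) * g u := by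
          apply setIntegral_mono_on hfint.integrableOn ((hgint.const_mul _).integrableOn)
            (measurableSet_Iic.inter measurableSet_Iic)
          intro u hu
          have hb : u - w j ≤ T := by
            have := hu.2
            simp only [Set.mem_Iic] at this
            rw [hc] at this
            linarith
          calc f u ≤ (∏ l ∈ Finset.univ.erase j, Phi1 (u - w l + 2*η)) *
              (phi1 (u - w j) * Real.exp (2 * η * |u - w j|)) := by
                apply mul_le_mul_of_nonneg_right _
                  (mul_nonneg (phi1_nonneg _) (Real.exp_nonneg _))
                apply Finset.prod_le_prod (fun l _ => Phi1_nonneg _)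
                intro l _
                apply Phi1_mono
                linarith [hη.le]
            _ ≤ (∏ l ∈ Finset.univ.erase j, Phi1 (u - w l + 2*η)) *
              (Real.exp (4*η*T + 2*η^2) * phi1 (u - w j + 2*η)) :=
                mul_le_mul_of_nonneg_left (phi_exp_pointwise_le hη hT hb)
                  (prod_Phi1_nonneg _ _ _ _)
            _ = Real.exp (4*η*T + 2*η^2) * g u := by rw [hg]; ring
      _ ≤ ∫ u in Set.Iic (0:ℝ), Real.exp (4*η*T + 2*η^2) * g u := by
          apply setIntegral_mono_set (hgint.const_mul _).integrableOn
          · filter_upwards with u using mul_nonneg (Real.exp_nonneg _) (hgnn u)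
          · exact HasSubset.Subset.eventuallyLE Set.inter_subset_left
  have hterm2 : (∫ u in Set.Iic (0:ℝ) \ Set.Iic c, f u) ≤
      Real.exp (2*η^2) * Real.exp (-(T - 2*η)^2/2) := by
    have hdiff_sub : Set.Iic (0:ℝ) \ Set.Iic c ⊆ Set.Ioi c := fun u hu => by
      simp only [Set.mem_diff, Set.mem_Iic, not_le, Set.mem_Ioi] at hu ⊢
      exact hu.2
    calc (∫ u in Set.Iic (0:ℝ) \ Set.Iic c, f u) ≤ ∫ u in Set.Ioi c, f u := by
          apply setIntegral_mono_set hfint.integrableOn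
            (by filter_upwards with u using hfnn u)
            (HasSubset.Subset.eventuallyLE hdiff_sub)
      _ ≤ ∫ u in Set.Ioi c, Real.exp (2*η^2) * phi1 (u - (w j + 2*η)) := by
          apply setIntegral_mono_on hfint.integrableOn
            ((integrable_phi1.comp_sub_right (w j + 2*η)).const_mul _).integrableOn
            measurableSet_Ioi
          intro u hu
          have hb : T < u - w j := by
            simp only [Set.mem_Ioi, hc] at hu
            linarith
          have habs : |u - w j| = u - w j := abs_of_pos (by linarith)
          calc f u ≤ 1 * (phi1 (u - w j) * Real.exp (2 * η * |u - w j|)) :=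
                mul_le_mul_of_nonneg_right (prod_Phi1_le_one _ _ _ _)
                  (mul_nonneg (phi1_nonneg _) (Real.exp_nonneg _))
            _ = phi1 (u - w j) * Real.exp ((2*η) * (u - w j)) := by
                rw [one_mul, habs]
            _ = Real.exp ((2*η)^2/2) * phi1 (u - w j - 2*η) := phi1_mul_exp _ _
            _ = Real.exp (2*η^2) * phi1 (u - (w j + 2*η)) := by
                rw [show (2*η)^2/2 = 2*η^2 from by ring,
                  show u - w j - 2*η = u - (w j + 2*η) from by ring]
      _ = Real.exp (2*η^2) * ∫ u in Set.Ioi c, phi1 (u - (w j + 2*η)) := integral_const_mul _ _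
      _ ≤ Real.exp (2*η^2) * Real.exp (-(T - 2*η)^2/2) := by
          apply mul_le_mul_of_nonneg_left _ (Real.exp_nonneg _)
          rw [integral_shift_Ioi c (w j + 2*η), show c - (w j + 2*η) = T - 2*η from by
            rw [hc]; ring]
          exact tail_le_gauss (by linarith)
  exact add_le_add hterm1 hterm2

lemma sum_g_le {d : ℕ} (hd : 0 < d) (w : Fin d → ℝ) (η : ℝ) :
    (∑ j, ∫ u in Set.Iic (0:ℝ), (∏ l ∈ Finset.univ.erase j, Phi1 (u - w l + 2*η)) *
      phi1 (u - w j + 2*η)) ≤ 1 := by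
  have h := sum_integral_G_le hd (fun l => w l - 2*η)
  have he : ∀ j : Fin d,
      (∫ u in Set.Iic (0:ℝ), (∏ l ∈ Finset.univ.erase j, Phi1 (u - w l + 2*η)) *
        phi1 (u - w j + 2*η)) =
      ∫ u in Set.Iic (0:ℝ), (∏ l ∈ Finset.univ.erase j, Phi1 (u - (w l - 2*η))) *
        phi1 (u - (w j - 2*η)) := by
    intro j
    apply setIntegral_congr_fun measurableSet_Iic
    intro u _
    dsimp only
    rw [show u - (w j - 2*η) = u - w j + 2*η from by ring]
    congr 1
    apply Finset.prod_congr rfl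
    intro l _
    rw [show u - (w l - 2*η) = u - w l + 2*η from by ring]
  rw [Finset.sum_congr rfl (fun j _ => he j)]
  exact h

lemma sum_Lint_le (K : ℝ) (hK : 0 < K) {d : ℕ} (hd3 : 3 ≤ d) (w : Fin d → ℝ) :
    (∑ j, Lint w j (K / Real.sqrt (Real.log d))) ≤
      Real.exp (8*K^2) * (2 * Real.exp (2*K^2)) + Real.exp (4*(Real.sqrt 2)*K + 2*K^2)
        + Real.exp (2*K^2) * Real.exp (2*(Real.sqrt 2)*K) := by
  have hd0 : 0 < d := by omega
  have hdR : (3:ℝ) ≤ (d:ℕ) := by exact_mod_cast hd3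
  have hdR0 : (0:ℝ) < (d:ℕ) := by positivity
  set L := Real.log (d:ℕ) with hL
  have hL1 : 1 ≤ L := by
    have h3 : (1:ℝ) ≤ Real.log 3 := by
      rw [Real.le_log_iff_exp_le (by norm_num : (0:ℝ) < 3)]
      have := Real.exp_one_lt_d9
      linarith
    calc (1:ℝ) ≤ Real.log 3 := h3
      _ ≤ L := Real.log_le_log (by norm_num) hdR
  have hL0 : 0 < L := lt_of_lt_of_le one_pos hL1
  have hsL : 0 < Real.sqrt L := Real.sqrt_pos.2 hL0
  set η := K / Real.sqrt L with hηdef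
  have hη : 0 < η := div_pos hK hsL
  have hηK : η ≤ K := by
    apply div_le_self hK.le
    rw [show (1:ℝ) = Real.sqrt 1 from (Real.sqrt_one).symm]
    exact Real.sqrt_le_sqrt hL1
  have hη2 : η^2 ≤ K^2 := by nlinarith
  set T := Real.sqrt (2*L) with hTdef
  have hT0 : 0 ≤ T := Real.sqrt_nonneg _
  have hηT : η * T = K * Real.sqrt 2 := by
    rw [hηdef, hTdef, Real.sqrt_mul (by norm_num : (0:ℝ) ≤ 2) L]
    field_simp
  have hT2 : T^2 = 2*L := Real.sq_sqrt (by positivity)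
  have hexpT : Real.exp (-(T^2)/2) = 1/(d:ℝ) := by
    rw [hT2, show -(2*L)/2 = -L from by ring, Real.exp_neg, Real.exp_log hdR0, one_div]
  have hC2nn : (0:ℝ) ≤ Real.exp (8*K^2) * (2 * Real.exp (2*K^2)) := by positivity
  have hC3nn : (0:ℝ) ≤ Real.exp (2*K^2) * Real.exp (2*(Real.sqrt 2)*K) := by positivity
  have hC1nn : (0:ℝ) ≤ Real.exp (4*(Real.sqrt 2)*K + 2*K^2) := by positivity
  by_cases hcase : 4*η ≤ T
  · -- large d case
    have hstep : ∀ j : Fin d, Lint w j η ≤ Real.exp (4*η*T + 2*η^2) *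
        (∫ u in Set.Iic (0:ℝ), (∏ l ∈ Finset.univ.erase j, Phi1 (u - w l + 2*η)) *
          phi1 (u - w j + 2*η))
        + Real.exp (2*η^2) * Real.exp (-(T - 2*η)^2/2) :=
      fun j => Lint_split w j hη hcase
    have hIj_nn : ∀ j : Fin d, (0:ℝ) ≤
        ∫ u in Set.Iic (0:ℝ), (∏ l ∈ Finset.univ.erase j, Phi1 (u - w l + 2*η)) *
          phi1 (u - w j + 2*η) := by
      intro j
      apply setIntegral_nonneg measurableSet_Iic
      intro u _
      exact mul_nonneg (prod_Phi1_nonneg _ _ _ _) (phi1_nonneg _)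
    calc (∑ j, Lint w j η)
        ≤ ∑ j : Fin d, (Real.exp (4*η*T + 2*η^2) *
            (∫ u in Set.Iic (0:ℝ), (∏ l ∈ Finset.univ.erase j, Phi1 (u - w l + 2*η)) *
              phi1 (u - w j + 2*η))
            + Real.exp (2*η^2) * Real.exp (-(T - 2*η)^2/2)) :=
          Finset.sum_le_sum (fun j _ => hstep j)
      _ = Real.exp (4*η*T + 2*η^2) *
            (∑ j : Fin d, ∫ u in Set.Iic (0:ℝ),
              (∏ l ∈ Finset.univ.erase j, Phi1 (u - w l + 2*η)) * phi1 (u - w j + 2*η))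
          + (d:ℝ) * (Real.exp (2*η^2) * Real.exp (-(T - 2*η)^2/2)) := by
          rw [Finset.sum_add_distrib, ← Finset.mul_sum, Finset.sum_const, Finset.card_univ,
            Fintype.card_fin, nsmul_eq_mul]
      _ ≤ Real.exp (4*(Real.sqrt 2)*K + 2*K^2) * 1
          + Real.exp (2*K^2) * Real.exp (2*(Real.sqrt 2)*K) := by
          apply add_le_add
          · apply mul_le_mul _ (sum_g_le hd0 w η)
              (Finset.sum_nonneg (fun j _ => hIj_nn j)) (by positivity)
            apply Real.exp_le_exp.2
            have h4 : 4*η*T = 4*(Real.sqrt 2)*K := by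
              rw [show 4*η*T = 4*(η*T) from by ring, hηT]; ring
            rw [h4]
            linarith
          · have hexp1 : Real.exp (-(T - 2*η)^2/2) ≤ Real.exp (2*(η*T)) * Real.exp (-(T^2)/2) := by
              rw [← Real.exp_add]
              apply Real.exp_le_exp.2
              nlinarith [sq_nonneg η]
            calc (d:ℝ) * (Real.exp (2*η^2) * Real.exp (-(T - 2*η)^2/2))
                ≤ (d:ℝ) * (Real.exp (2*η^2) * (Real.exp (2*(η*T)) * (1/(d:ℝ)))) := by
                  apply mul_le_mul_of_nonneg_left _ hdR0.le
                  apply mul_le_mul_of_nonneg_left _ (Real.exp_nonneg _)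
                  rw [← hexpT]
                  exact hexp1
              _ = Real.exp (2*η^2) * Real.exp (2*(η*T)) := by
                  field_simp
              _ ≤ Real.exp (2*K^2) * Real.exp (2*(Real.sqrt 2)*K) := by
                  rw [hηT]
                  apply mul_le_mul _ _ (Real.exp_nonneg _) (Real.exp_nonneg _)
                  · exact Real.exp_le_exp.2 (by linarith)
                  · exact Real.exp_le_exp.2 (by nlinarith [Real.sqrt_nonneg (2:ℝ)])
      _ ≤ _ := by rw [mul_one]; linarith
  · -- small d case
    push_neg at hcase
    have hdexp : (d:ℝ) ≤ Real.exp (8*K^2) := by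
      have hLlt : L < 8*K^2 := by nlinarith
      calc (d:ℝ) = Real.exp L := (Real.exp_log hdR0).symm
        _ ≤ Real.exp (8*K^2) := Real.exp_le_exp.2 hLlt.le
    calc (∑ j, Lint w j η) ≤ ∑ _j : Fin d, 2 * Real.exp ((2*η)^2/2) :=
          Finset.sum_le_sum (fun j _ => Lint_le_crude w j hη)
      _ = (d:ℝ) * (2 * Real.exp ((2*η)^2/2)) := by
          rw [Finset.sum_const, Finset.card_univ, Fintype.card_fin, nsmul_eq_mul]
      _ ≤ Real.exp (8*K^2) * (2 * Real.exp (2*K^2)) := by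
          have h1 : (2*η)^2/2 ≤ 2*K^2 := by nlinarith
          have h2 : 2 * Real.exp ((2*η)^2/2) ≤ 2 * Real.exp (2*K^2) := by
            have := Real.exp_le_exp.2 h1; linarith
          exact mul_le_mul hdexp h2
            (mul_nonneg (by norm_num) (Real.exp_nonneg _)) (Real.exp_nonneg _)
      _ ≤ _ := by linarith

/-- for d ≥ 3 and η = K/√(log d),
sup_w Σ_j sup_{‖y‖_∞ ≤ η} |∂_j Ψ(w + y)| ≤ C with C depending only on K. -/
theorem stmt9 (K : ℝ) (hK : 0 < K) :
    ∃ C : ℝ, ∀ d : ℕ, 3 ≤ d → ∀ w : Fin d → ℝ,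
      ∑ j : Fin d,
        (⨆ y : {y : Fin d → ℝ // ‖y‖ ≤ K / Real.sqrt (Real.log d)},
          |fderiv ℝ (Psi d) (w + y.1) (Pi.single j 1)|) ≤ C := by
  refine ⟨Real.exp (8*K^2) * (2 * Real.exp (2*K^2)) + Real.exp (4*(Real.sqrt 2)*K + 2*K^2)
    + Real.exp (2*K^2) * Real.exp (2*(Real.sqrt 2)*K), ?_⟩
  intro d hd3 w
  have hd0 : 0 < d := by omega
  have hdR : (3:ℝ) ≤ (d:ℕ) := by exact_mod_cast hd3
  have hL1 : 1 ≤ Real.log (d:ℕ) := by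
    have h3 : (1:ℝ) ≤ Real.log 3 := by
      rw [Real.le_log_iff_exp_le (by norm_num : (0:ℝ) < 3)]
      have := Real.exp_one_lt_d9
      linarith
    calc (1:ℝ) ≤ Real.log 3 := h3
      _ ≤ Real.log (d:ℕ) := Real.log_le_log (by norm_num) hdR
  have hη : 0 < K / Real.sqrt (Real.log (d:ℕ)) :=
    div_pos hK (Real.sqrt_pos.2 (by linarith))
  haveI hne : Nonempty {y : Fin d → ℝ // ‖y‖ ≤ K / Real.sqrt (Real.log (d:ℕ))} :=
    ⟨⟨0, by rw [norm_zero]; exact hη.le⟩⟩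
  calc ∑ j : Fin d,
        (⨆ y : {y : Fin d → ℝ // ‖y‖ ≤ K / Real.sqrt (Real.log d)},
          |fderiv ℝ (Psi d) (w + y.1) (Pi.single j 1)|)
      ≤ ∑ j : Fin d, Lint w j (K / Real.sqrt (Real.log d)) := by
        apply Finset.sum_le_sum
        intro j _
        apply ciSup_le
        rintro ⟨y, hy⟩
        exact fderiv_le hd0 w y hη hy j
    _ ≤ _ := sum_Lint_le K hK hd3 w
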